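/- Fix v̄ > 0. For every probability measure G on [0, ∞), ∫_0^1 ∫_{[0,∞)} (φ_{v̄}(z) − p·𝟙{φ_{v̄}(z) ≥ p}) dG(p) dz ≥ v̄/e. -/

import Mathlib

/-- The equal-revenue quantile function: `φ_{v̄}(z) = v̄/(e(1−z))` for
`z < 1 − 1/e` and `φ_{v̄}(z) = v̄` for `z ≥ 1 − 1/e`. -/
noncomputable def erQuantile (vb z : ℝ) : ℝ :=
  if z < 1 - 1 / Real.exp 1 then vb / (Real.exp 1 * (1 - z)) else vb

open MeasureTheory Set

lemma one_lt_E : 1 < Real.exp 1 := by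
  have := Real.exp_one_gt_d9; linarith

lemma erQuantile_pos {vb : ℝ} (hvb : 0 < vb) (z : ℝ) : 0 < erQuantile vb z := by
  have hE : (0:ℝ) < Real.exp 1 := Real.exp_pos 1
  have hE1 : (1:ℝ) < Real.exp 1 := one_lt_E
  unfold erQuantile
  split_ifs with h
  · apply div_pos hvb
    have h0 : (0:ℝ) < 1 / Real.exp 1 := by positivity
    have h1 : 1 / Real.exp 1 < 1 - z := by linarith
    nlinarith
  · exact hvb

lemma erQuantile_le {vb : ℝ} (hvb : 0 < vb) (z : ℝ) : erQuantile vb z ≤ vb := by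
  have hE : (0:ℝ) < Real.exp 1 := Real.exp_pos 1
  have hE1 : (1:ℝ) < Real.exp 1 := one_lt_E
  unfold erQuantile
  split_ifs with h
  · have h0 : (0:ℝ) < 1 / Real.exp 1 := by positivity
    have h1 : 1 / Real.exp 1 < 1 - z := by linarith
    have hpos : (0:ℝ) < Real.exp 1 * (1 - z) := by nlinarith
    rw [div_le_iff₀ hpos]
    have h2 : (1:ℝ) ≤ Real.exp 1 * (1 - z) := by
      have : Real.exp 1 * (1 / Real.exp 1) ≤ Real.exp 1 * (1 - z) := by nlinarith
      rwa [mul_one_div, div_self (ne_of_gt hE)] at this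
    nlinarith
  · exact le_refl vb

lemma erQuantile_measurable (vb : ℝ) : Measurable (erQuantile vb) := by
  unfold erQuantile
  exact Measurable.ite (measurableSet_lt measurable_id measurable_const)
    (measurable_const.div ((measurable_const.mul (measurable_const.sub measurable_id))))
    measurable_const

lemma erQuantile_integral {vb : ℝ} (hvb : 0 < vb) :
    ∫ z in (0:ℝ)..1, erQuantile vb z = 2 * (vb / Real.exp 1) := by
  have hE : (0:ℝ) < Real.exp 1 := Real.exp_pos 1
  have hE1 : (1:ℝ) < Real.exp 1 := one_lt_E
  set c : ℝ := 1 - 1 / Real.exp 1 with hc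
  have hc0 : 0 < c := by
    have : 1 / Real.exp 1 < 1 := by rw [div_lt_one hE]; exact hE1
    simp only [hc]; linarith
  have hc1 : c < 1 := by
    have : (0:ℝ) < 1 / Real.exp 1 := by positivity
    simp only [hc]; linarith
  have h1c : 1 - c = 1 / Real.exp 1 := by simp only [hc]; ring
  have heq1 : Set.EqOn (erQuantile vb) (fun z => (vb / Real.exp 1) * (1 - z)⁻¹)
      (Set.uIcc 0 c) := by
    intro z hz
    rw [Set.uIcc_of_le hc0.le] at hz
    unfold erQuantile
    by_cases h : z < c
    · rw [if_pos h]
      have hz1 : (1:ℝ) - z ≠ 0 := by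
        have : z < 1 := lt_trans h hc1
        intro hcon; have := sub_eq_zero.mp hcon; linarith
      field_simp
    · rw [if_neg h]
      have hzc : z = c := le_antisymm hz.2 (not_lt.mp h)
      have hinv : (1 - c)⁻¹ = Real.exp 1 := by rw [h1c]; simp
      simp only [hzc, hinv]
      field_simp
  have heq2 : Set.EqOn (erQuantile vb) (fun _ => vb) (Set.uIcc c 1) := by
    intro z hz
    rw [Set.uIcc_of_le hc1.le] at hz
    unfold erQuantile
    rw [if_neg (not_lt.mpr hz.1)]
  have hcont1 : ContinuousOn (fun z => (vb / Real.exp 1) * (1 - z)⁻¹) (Set.uIcc 0 c) := by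
    apply ContinuousOn.mul continuousOn_const
    apply ContinuousOn.inv₀ (by fun_prop)
    intro z hz
    rw [Set.uIcc_of_le hc0.le] at hz
    have : z < 1 := lt_of_le_of_lt hz.2 hc1
    intro hcon; have := sub_eq_zero.mp hcon; linarith
  have hint1 : IntervalIntegrable (erQuantile vb) volume 0 c := by
    refine (hcont1.intervalIntegrable).congr ?_
    exact (fun z hz => (heq1 (Set.uIoc_subset_uIcc hz)).symm)
  have hint2 : IntervalIntegrable (erQuantile vb) volume c 1 := by
    refine (intervalIntegrable_const (c := vb)).congr ?_
    exact (fun z hz => (heq2 (Set.uIoc_subset_uIcc hz)).symm)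
  have hval1 : ∫ z in (0:ℝ)..c, erQuantile vb z = vb / Real.exp 1 := by
    rw [intervalIntegral.integral_congr heq1, intervalIntegral.integral_const_mul]
    have hcomp : (∫ z in (0:ℝ)..c, (1 - z)⁻¹)
        = ∫ x in (1-c)..(1-(0:ℝ)), x⁻¹ :=
      intervalIntegral.integral_comp_sub_left (fun x => x⁻¹) 1
    rw [hcomp]
    rw [h1c]
    rw [integral_inv]
    · rw [sub_zero, one_div_one_div, Real.log_exp, mul_one]
    · rw [sub_zero]
      intro hmem
      have h01 : 1 / Real.exp 1 ≤ 1 := by rw [div_le_one hE]; exact hE1.le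
      rw [Set.uIcc_of_le h01] at hmem
      have hp : (0:ℝ) < 1 / Real.exp 1 := by positivity
      linarith [hmem.1]
  have hval2 : ∫ z in c..(1:ℝ), erQuantile vb z = vb / Real.exp 1 := by
    rw [intervalIntegral.integral_congr heq2, intervalIntegral.integral_const]
    rw [h1c]
    rw [smul_eq_mul]
    ring
  rw [← intervalIntegral.integral_add_adjacent_intervals hint1 hint2, hval1, hval2]
  ring

lemma revenue_le {vb : ℝ} (hvb : 0 < vb) {p : ℝ} (hp : 0 ≤ p) :
    ∫ z in Set.Ioc (0:ℝ) 1, (if p ≤ erQuantile vb z then p else 0) ∂(volume : Measure ℝ)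
      ≤ vb / Real.exp 1 := by
  have hE : (0:ℝ) < Real.exp 1 := Real.exp_pos 1
  have hE1 : (1:ℝ) < Real.exp 1 := one_lt_E
  haveI hfin : IsFiniteMeasure ((volume : Measure ℝ).restrict (Set.Ioc (0:ℝ) 1)) :=
    ⟨by rw [Measure.restrict_apply_univ]; simp [Real.volume_Ioc]⟩
  have hmeas : Measurable (fun z => if p ≤ erQuantile vb z then p else 0) :=
    Measurable.ite (measurableSet_le measurable_const (erQuantile_measurable vb))
      measurable_const measurable_const
  have hint1 : IntegrableOn (fun z => if p ≤ erQuantile vb z then p else 0)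
      (Set.Ioc (0:ℝ) 1) volume := by
    refine (integrable_const p).mono' hmeas.aestronglyMeasurable (ae_of_all _ fun z => ?_)
    by_cases h : p ≤ erQuantile vb z
    · rw [if_pos h, Real.norm_eq_abs, abs_of_nonneg hp]
    · rw [if_neg h]; simpa using hp
  rcases le_or_gt p (vb / Real.exp 1) with hp1 | hp1
  · calc ∫ z in Set.Ioc (0:ℝ) 1, (if p ≤ erQuantile vb z then p else 0) ∂volume
        ≤ ∫ _z in Set.Ioc (0:ℝ) 1, p ∂volume := by
          refine setIntegral_mono_on hint1 (integrable_const p) measurableSet_Ioc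
            (fun z _ => ?_)
          by_cases h : p ≤ erQuantile vb z
          · rw [if_pos h]
          · rw [if_neg h]; exact hp
      _ = p := by rw [setIntegral_const]; simp [Real.volume_Ioc]
      _ ≤ vb / Real.exp 1 := hp1
  rcases le_or_gt p vb with hp2 | hp2
  · -- middle case : vb / e < p ≤ vb
    have hp0 : 0 < p := lt_of_le_of_lt (by positivity) hp1
    have hep : (0:ℝ) < Real.exp 1 * p := by positivity
    set a : ℝ := 1 - vb / (Real.exp 1 * p) with ha
    clear_value a
    have hq : 0 < vb / (Real.exp 1 * p) := by positivity
    have ha0 : 0 < a := by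
      have h5 : vb / (Real.exp 1 * p) < 1 := by
        rw [div_lt_one hep]
        have := (div_lt_iff₀ hE).mp hp1
        nlinarith
      rw [ha]; linarith
    have hac : a ≤ 1 - 1 / Real.exp 1 := by
      have h6 : 1 / Real.exp 1 ≤ vb / (Real.exp 1 * p) := by
        rw [div_le_div_iff₀ hE hep]
        nlinarith
      rw [ha]; linarith
    have ha1 : a < 1 := by rw [ha]; linarith
    have hsub : Set.Icc a 1 ⊆ Set.Ioc (0:ℝ) 1 :=
      fun z hz => ⟨lt_of_lt_of_le ha0 hz.1, hz.2⟩
    have hint2 : IntegrableOn (Set.indicator (Set.Icc a 1) (fun _ => p))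
        (Set.Ioc (0:ℝ) 1) volume :=
      (integrable_const p).indicator measurableSet_Icc
    have hpt : ∀ z ∈ Set.Ioc (0:ℝ) 1,
        (if p ≤ erQuantile vb z then p else 0)
          ≤ Set.indicator (Set.Icc a 1) (fun _ => p) z := by
      intro z hz
      by_cases h : p ≤ erQuantile vb z
      · rw [if_pos h]
        have hzmem : z ∈ Set.Icc a 1 := by
          refine ⟨?_, hz.2⟩
          by_cases hzc : z < 1 - 1 / Real.exp 1
          · have hφ : erQuantile vb z = vb / (Real.exp 1 * (1 - z)) := if_pos hzc
            rw [hφ] at h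
            have h1z : (0:ℝ) < 1 - z := by
              have h1e : (0:ℝ) < 1 / Real.exp 1 := by positivity
              linarith
            have hpos : (0:ℝ) < Real.exp 1 * (1 - z) := by positivity
            have h2 : p * (Real.exp 1 * (1 - z)) ≤ vb := (le_div_iff₀ hpos).mp h
            have h3 : 1 - z ≤ vb / (Real.exp 1 * p) := by
              rw [le_div_iff₀ hep]; nlinarith
            rw [ha]; linarith
          · push_neg at hzc; exact le_trans hac hzc
        rw [Set.indicator_of_mem hzmem]
      · rw [if_neg h]
        exact Set.indicator_nonneg (fun _ _ => hp) z
    calc ∫ z in Set.Ioc (0:ℝ) 1, (if p ≤ erQuantile vb z then p else 0) ∂volume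
        ≤ ∫ z in Set.Ioc (0:ℝ) 1, Set.indicator (Set.Icc a 1) (fun _ => p) z ∂volume :=
          setIntegral_mono_on hint1 hint2 measurableSet_Ioc hpt
      _ = vb / Real.exp 1 := by
          rw [integral_indicator measurableSet_Icc,
            Measure.restrict_restrict measurableSet_Icc,
            Set.inter_eq_self_of_subset_left hsub, setIntegral_const, smul_eq_mul,
            Real.volume_real_Icc_of_le (by linarith : a ≤ 1)]
          have h1a : 1 - a = vb / (Real.exp 1 * p) := by rw [ha]; ring
          rw [h1a]
          field_simp
  · -- p > vb : integrand is zero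
    have hz : ∀ z : ℝ, ¬ p ≤ erQuantile vb z :=
      fun z => not_le.mpr (lt_of_le_of_lt (erQuantile_le hvb z) hp2)
    simp only [hz, if_false]
    rw [integral_zero]
    positivity

theorem stmt_8 (vb : ℝ) (hvb : 0 < vb) (G : MeasureTheory.Measure ℝ)
    [MeasureTheory.IsProbabilityMeasure G] (hG : ∀ᵐ p ∂G, 0 ≤ p) :
    vb / Real.exp 1 ≤
      ∫ z in (0:ℝ)..1,
        ∫ p, (erQuantile vb z - if p ≤ erQuantile vb z then p else 0) ∂G := by
  have hE : (0:ℝ) < Real.exp 1 := Real.exp_pos 1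
  set μ : Measure ℝ := volume.restrict (Set.Ioc (0:ℝ) 1) with hμ
  haveI : IsFiniteMeasure μ :=
    ⟨by rw [hμ, Measure.restrict_apply_univ]; simp [Real.volume_Ioc]⟩
  have hmeas : Measurable (fun q : ℝ × ℝ => if q.2 ≤ erQuantile vb q.1 then q.2 else 0) :=
    Measurable.ite
      (measurableSet_le measurable_snd ((erQuantile_measurable vb).comp measurable_fst))
      measurable_snd measurable_const
  have hG0 : G {p : ℝ | p < 0} = 0 := by
    have := ae_iff.mp hG
    simpa [not_le] using this
  have hprod : Integrable (fun q : ℝ × ℝ => if q.2 ≤ erQuantile vb q.1 then q.2 else 0)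
      (μ.prod G) := by
    refine (integrable_const vb).mono' hmeas.aestronglyMeasurable ?_
    rw [ae_iff]
    refine measure_mono_null (t := (Set.univ : Set ℝ) ×ˢ {p : ℝ | p < 0}) ?_ ?_
    · intro q hq
      simp only [Set.mem_setOf_eq] at hq
      refine ⟨Set.mem_univ _, ?_⟩
      simp only [Set.mem_setOf_eq]
      by_contra hcon
      push_neg at hcon
      apply hq
      by_cases h : q.2 ≤ erQuantile vb q.1
      · rw [if_pos h, Real.norm_eq_abs, abs_of_nonneg hcon]
        exact le_trans h (erQuantile_le hvb q.1)
      · rw [if_neg h]; simpa using hvb.le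
    · rw [Measure.prod_prod, hG0, mul_zero]
  have hGint : ∀ z : ℝ, Integrable (fun p => if p ≤ erQuantile vb z then p else 0) G := by
    intro z
    refine (integrable_const vb).mono'
      ((Measurable.ite (measurableSet_le measurable_id measurable_const)
        measurable_id measurable_const).aestronglyMeasurable) ?_
    filter_upwards [hG] with p hp
    by_cases h : p ≤ erQuantile vb z
    · rw [if_pos h, Real.norm_eq_abs, abs_of_nonneg hp]
      exact le_trans h (erQuantile_le hvb z)
    · rw [if_neg h]; simpa using hvb.le
  have h1 : ∀ z : ℝ, (∫ p, (erQuantile vb z - if p ≤ erQuantile vb z then p else 0) ∂G)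
      = erQuantile vb z - ∫ p, (if p ≤ erQuantile vb z then p else 0) ∂G := by
    intro z
    rw [integral_sub (integrable_const _) (hGint z), integral_const, probReal_univ,
      one_smul]
  rw [intervalIntegral.integral_of_le zero_le_one]
  simp only [h1]
  have hφint : Integrable (erQuantile vb) μ := by
    refine (integrable_const vb).mono' (erQuantile_measurable vb).aestronglyMeasurable
      (ae_of_all _ fun z => ?_)
    rw [Real.norm_eq_abs, abs_of_pos (erQuantile_pos hvb z)]
    exact erQuantile_le hvb z
  have hinner_int : Integrable
      (fun z => ∫ p, (if p ≤ erQuantile vb z then p else 0) ∂G) μ :=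
    hprod.integral_prod_left
  rw [integral_sub hφint hinner_int]
  have hφval : ∫ z, erQuantile vb z ∂μ = 2 * (vb / Real.exp 1) := by
    have := erQuantile_integral hvb
    rwa [intervalIntegral.integral_of_le zero_le_one] at this
  have hswap : (∫ z, (∫ p, (if p ≤ erQuantile vb z then p else 0) ∂G) ∂μ)
      = ∫ p, (∫ z, (if p ≤ erQuantile vb z then p else 0) ∂μ) ∂G :=
    integral_integral_swap (f := fun z p => if p ≤ erQuantile vb z then p else 0) hprod
  have hle : (∫ p, (∫ z, (if p ≤ erQuantile vb z then p else 0) ∂μ) ∂G)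
      ≤ vb / Real.exp 1 := by
    calc (∫ p, (∫ z, (if p ≤ erQuantile vb z then p else 0) ∂μ) ∂G)
        ≤ ∫ _p, vb / Real.exp 1 ∂G := by
          refine integral_mono_ae hprod.integral_prod_right (integrable_const _) ?_
          filter_upwards [hG] with p hp
          exact revenue_le hvb hp
      _ = vb / Real.exp 1 := by simp
  rw [hφval, hswap]
  linarith
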